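/- Let X = {x_1, …, x_k} ⊂ ℝ^d be a finite set of points. If v, w ∈ S^{d−1} lie in the same connected component of Σ(X), then there exists an order-preserving bijection (order isomorphism, hence a homeomorphism) φ : ℝ → ℝ such that φ(⟨v, x⟩) = ⟨w, x⟩ for every x ∈ X. -/

import Mathlib

open scoped RealInnerProductSpace

/-- The union of equalizer hyperspheres `W(X) ⊆ S^{d-1}` for a family of points
`x : Fin k → ℝ^d`. -/
def hyperplaneUnion {d k : ℕ} (x : Fin k → EuclideanSpace ℝ (Fin d)) :
    Set (EuclideanSpace ℝ (Fin d)) :=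
  ⋃ (i : Fin k) (j : Fin k) (_ : i ≠ j),
    {v ∈ Metric.sphere (0 : EuclideanSpace ℝ (Fin d)) 1 | ⟪v, x i⟫ = ⟪v, x j⟫}

/-- `Σ(X) = S^{d-1} \ W(X)`. -/
def sigmaSet {d k : ℕ} (x : Fin k → EuclideanSpace ℝ (Fin d)) :
    Set (EuclideanSpace ℝ (Fin d)) :=
  Metric.sphere (0 : EuclideanSpace ℝ (Fin d)) 1 \ hyperplaneUnion x

/-- A piecewise-linear map fixing `(-∞, p]` and with slope `s` on `[p, ∞)`. -/
noncomputable def bend (p s : ℝ) : ℝ → ℝ := fun t => min t p + s * max (t - p) 0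

lemma bend_of_le {p s t : ℝ} (h : t ≤ p) : bend p s t = t := by
  simp [bend, min_eq_left h, max_eq_right (sub_nonpos.mpr h)]

lemma bend_of_ge {p s t : ℝ} (h : p ≤ t) : bend p s t = p + s * (t - p) := by
  simp [bend, min_eq_right h, max_eq_left (sub_nonneg.mpr h)]

lemma bend_strictMono {p s : ℝ} (hs : 0 < s) : StrictMono (bend p s) := by
  intro t t' h
  rcases le_total t' p with h' | h'
  · rw [bend_of_le (h.le.trans h'), bend_of_le h']; exact h
  rcases le_total p t with h'' | h''
  · rw [bend_of_ge h'', bend_of_ge (h''.trans h.le)]; nlinarith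
  · rw [bend_of_le h'', bend_of_ge h']
    nlinarith [mul_nonneg hs.le (sub_nonneg.mpr h')]

lemma bend_bend {p s : ℝ} (hs : 0 < s) (t : ℝ) : bend p s⁻¹ (bend p s t) = t := by
  rcases le_total t p with h | h
  · rw [bend_of_le h, bend_of_le h]
  · rw [bend_of_ge h, bend_of_ge (by nlinarith [mul_nonneg hs.le (sub_nonneg.mpr h)])]
    field_simp
    ring

/-- `bend` as an order isomorphism of `ℝ`. -/
noncomputable def bendIso (p s : ℝ) (hs : 0 < s) : ℝ ≃o ℝ :=
  StrictMono.orderIsoOfSurjective _ (bend_strictMono hs)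
    (fun t => ⟨bend p s⁻¹ t, by
      have := bend_bend (p := p) (inv_pos.mpr hs) t
      rwa [inv_inv] at this⟩)

lemma bendIso_apply (p s : ℝ) (hs : 0 < s) (t : ℝ) : bendIso p s hs t = bend p s t := rfl

/-- Key combinatorial lemma: finitely many prescribed values with the same strict order
can be matched by an order automorphism of `ℝ`. -/
lemma key_lemma : ∀ (k : ℕ) (a b : Fin k → ℝ),
    (∀ i j, a i < a j ↔ b i < b j) → ∃ φ : ℝ ≃o ℝ, ∀ i, φ (a i) = b i := by
  intro k
  induction k with
  | zero => exact fun a b _ => ⟨OrderIso.refl ℝ, fun i => i.elim0⟩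
  | succ k ih =>
    intro a b hcomp
    have heq : ∀ i j, a i = a j → b i = b j := by
      intro i j h
      by_contra h'
      rcases lt_or_gt_of_ne h' with hl | hl
      · exact absurd ((hcomp i j).mpr hl) (by rw [h]; exact lt_irrefl _)
      · exact absurd ((hcomp j i).mpr hl) (by rw [h]; exact lt_irrefl _)
    obtain ⟨i₀, hi₀⟩ := Finite.exists_max a
    set a' : Fin k → ℝ := a ∘ i₀.succAbove with ha'
    set b' : Fin k → ℝ := b ∘ i₀.succAbove with hb'
    obtain ⟨φ₀, hφ₀⟩ := ih a' b' (fun i j => hcomp _ _)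
    by_cases hex : ∃ j, a (i₀.succAbove j) = a i₀
    · obtain ⟨j, hj⟩ := hex
      refine ⟨φ₀, fun i => ?_⟩
      rcases eq_or_ne i i₀ with rfl | hne
      · have h1 : φ₀ (a' j) = b' j := hφ₀ j
        have h2 : a' j = a i := hj
        rw [← h2, h1]
        exact heq _ _ hj
      · obtain ⟨j', rfl⟩ := Fin.exists_succAbove_eq hne
        exact hφ₀ j'
    · push_neg at hex
      have hlt : ∀ j, a' j < a i₀ := fun j => lt_of_le_of_ne (hi₀ _) (hex j)
      have hblt : ∀ j, b' j < b i₀ := fun j => (hcomp _ _).mp (hlt j)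
      set c := φ₀ (a i₀) with hc_def
      have hc : ∀ j, b' j < c := fun j => by
        rw [← hφ₀ j]; exact φ₀.strictMono (hlt j)
      set p := Finset.fold max (min c (b i₀) - 1) b' Finset.univ with hp_def
      have hpc : p < c := by
        rw [hp_def, Finset.fold_max_lt]
        exact ⟨by have := min_le_left c (b i₀); linarith, fun j _ => hc j⟩
      have hpb : p < b i₀ := by
        rw [hp_def, Finset.fold_max_lt]
        exact ⟨by have := min_le_right c (b i₀); linarith, fun j _ => hblt j⟩
      have hple : ∀ j, b' j ≤ p := fun j =>
        (Finset.le_fold_max _).mpr (Or.inr ⟨j, Finset.mem_univ j, le_refl _⟩)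
      set s := (b i₀ - p) / (c - p) with hs_def
      have hs : 0 < s := div_pos (by linarith) (by linarith)
      refine ⟨φ₀.trans (bendIso p s hs), fun i => ?_⟩
      rcases eq_or_ne i i₀ with rfl | hne
      · show bendIso p s hs (φ₀ (a i)) = b i
        rw [← hc_def, bendIso_apply, bend_of_ge hpc.le, hs_def,
          div_mul_cancel₀ _ (by linarith : c - p ≠ 0)]
        ring
      · obtain ⟨j, rfl⟩ := Fin.exists_succAbove_eq hne
        show bendIso p s hs (φ₀ (a' j)) = b' j
        rw [hφ₀ j, bendIso_apply, bend_of_le (hple j)]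

lemma mem_sigmaSet_ne {d k : ℕ} {x : Fin k → EuclideanSpace ℝ (Fin d)}
    {v : EuclideanSpace ℝ (Fin d)} (hv : v ∈ sigmaSet x) {i j : Fin k} (hij : i ≠ j) :
    ⟪v, x i⟫ ≠ ⟪v, x j⟫ := by
  intro h
  exact hv.2 (Set.mem_iUnion.mpr ⟨i, Set.mem_iUnion.mpr ⟨j, Set.mem_iUnion.mpr
    ⟨hij, ⟨hv.1, h⟩⟩⟩⟩)

/-- if `v, w` lie in the same connected component of `Σ(X)`, then there is an
order-preserving bijection `φ : ℝ ≃o ℝ` with `φ ⟨v, x i⟩ = ⟨w, x i⟩` for every `i`. -/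
theorem stmt3 {d k : ℕ} (x : Fin k → EuclideanSpace ℝ (Fin d))
    (v w : EuclideanSpace ℝ (Fin d))
    (hv : v ∈ sigmaSet x)
    (hw : w ∈ connectedComponentIn (sigmaSet x) v) :
    ∃ φ : ℝ ≃o ℝ, ∀ i : Fin k, φ ⟪v, x i⟫ = ⟪w, x i⟫ := by
  have hw' : w ∈ sigmaSet x := connectedComponentIn_subset _ _ hw
  have hvc : v ∈ connectedComponentIn (sigmaSet x) v := mem_connectedComponentIn hv
  have hsub := connectedComponentIn_subset (sigmaSet x) v
  have key2 : ∀ i j : Fin k, (⟪v, x i⟫ < ⟪v, x j⟫) ↔ (⟪w, x i⟫ < ⟪w, x j⟫) := by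
    intro i j
    rcases eq_or_ne i j with rfl | hij
    · simp
    set f : EuclideanSpace ℝ (Fin d) → ℝ := fun u => ⟪u, x j⟫ - ⟪u, x i⟫ with hf
    have hcont : ContinuousOn f (connectedComponentIn (sigmaSet x) v) :=
      ((Continuous.inner continuous_id continuous_const).sub
        (Continuous.inner continuous_id continuous_const)).continuousOn
    have hnz : ∀ u ∈ connectedComponentIn (sigmaSet x) v, f u ≠ 0 := by
      intro u hu h0
      exact mem_sigmaSet_ne (hsub hu) hij (sub_eq_zero.mp h0).symm
    have hsign : 0 < f v ↔ 0 < f w := by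
      constructor <;> intro hpos
      · by_contra hneg
        have hneg' : f w < 0 := lt_of_le_of_ne (not_lt.mp hneg) (hnz w hw)
        obtain ⟨u, hu, hu0⟩ := isPreconnected_connectedComponentIn.intermediate_value
          hw hvc hcont (⟨hneg'.le, hpos.le⟩ : (0:ℝ) ∈ Set.Icc (f w) (f v))
        exact hnz u hu hu0
      · by_contra hneg
        have hneg' : f v < 0 := lt_of_le_of_ne (not_lt.mp hneg) (hnz v hvc)
        obtain ⟨u, hu, hu0⟩ := isPreconnected_connectedComponentIn.intermediate_value
          hvc hw hcont (⟨hneg'.le, hpos.le⟩ : (0:ℝ) ∈ Set.Icc (f v) (f w))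
        exact hnz u hu hu0
    constructor
    · intro h
      exact sub_pos.mp (hsign.mp (sub_pos.mpr h))
    · intro h
      exact sub_pos.mp (hsign.mpr (sub_pos.mpr h))
  exact key_lemma k (fun i => ⟪v, x i⟫) (fun i => ⟪w, x i⟫) key2
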